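/- For every ε > 0 there exists N such that for all n ≥ N, log p(n) > (√8·log 2)·√n/(1+ε). -/

import Mathlib

open List

private lemma gaps_main : ∀ (L : List ℕ) (a n : ℕ), List.Chain (· < ·) a (L ++ [n]) →
    (List.zipWith (fun x y => x - y) (L ++ [n]) (a :: L)).sum = n - a ∧ a < n ∧
      ∀ x ∈ List.zipWith (fun x y => x - y) (L ++ [n]) (a :: L), 0 < x
  | [], a, n, h => by
    have han : a < n := by change List.IsChain _ [a, n] at h; simpa using h
    simp only [List.nil_append, List.zipWith_cons_cons, List.zipWith_nil_right, List.zipWith,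
      List.sum_cons, List.sum_nil, List.mem_singleton, List.mem_cons, List.not_mem_nil, or_false]
    refine ⟨by omega, by omega, ?_⟩
    rintro x rfl
    omega
  | b :: T, a, n, h => by
    rw [List.cons_append] at h
    change List.IsChain _ (a :: b :: (T ++ [n])) at h
    rw [List.isChain_cons_cons] at h
    obtain ⟨hab, h2⟩ := h
    obtain ⟨hs, hbn, hp⟩ := gaps_main T b n h2
    simp only [List.cons_append, List.zipWith_cons_cons, List.sum_cons, List.mem_cons]
    refine ⟨by omega, by omega, ?_⟩
    rintro x (rfl | hx)
    · omega
    · exact hp x hx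

private lemma gaps_inj : ∀ (L L' : List ℕ) (a n : ℕ), List.Chain (· < ·) a (L ++ [n]) →
    List.Chain (· < ·) a (L' ++ [n]) →
    List.zipWith (fun x y => x - y) (L ++ [n]) (a :: L) =
      List.zipWith (fun x y => x - y) (L' ++ [n]) (a :: L') → L = L'
  | [], [], a, n, _, _, _ => rfl
  | [], c :: T', a, n, _, _, h => by
    exfalso
    have := congrArg List.length h
    simp [List.length_zipWith] at this
  | b :: T, [], a, n, _, _, h => by
    exfalso
    have := congrArg List.length h
    simp [List.length_zipWith] at this
  | b :: T, c :: T', a, n, h1, h2, h => by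
    rw [List.cons_append] at h1 h2
    change List.IsChain _ (a :: b :: (T ++ [n])) at h1
    change List.IsChain _ (a :: c :: (T' ++ [n])) at h2
    rw [List.isChain_cons_cons] at h1 h2
    simp only [List.cons_append, List.zipWith_cons_cons, List.cons.injEq] at h
    have hbc : b = c := by omega
    subst hbc
    rw [gaps_inj T T' b n h1.2 h2.2 h.2]

private lemma chain_sort {n : ℕ} (hn : 1 ≤ n) {S : Finset ℕ}
    (hS : S ⊆ Finset.Icc 1 (n - 1)) :
    List.Chain (· < ·) 0 (S.sort (· ≤ ·) ++ [n]) := by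
  have hbound : ∀ x ∈ S.sort (· ≤ ·), 1 ≤ x ∧ x ≤ n - 1 := by
    intro x hx
    have := hS ((Finset.mem_sort _).1 hx)
    exact Finset.mem_Icc.1 this
  show List.IsChain (· < ·) (0 :: (S.sort (· ≤ ·) ++ [n]))
  rw [List.isChain_iff_pairwise, List.pairwise_cons]
  constructor
  · intro x hx
    rcases List.mem_append.1 hx with h | h
    · have := hbound x h; omega
    · simp only [List.mem_singleton] at h; omega
  · rw [List.pairwise_append]
    refine ⟨S.sortedLT_sort.pairwise, List.pairwise_singleton _ _, ?_⟩
    intro x hx y hy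
    simp only [List.mem_singleton] at hy
    subst hy
    have := hbound x hx
    omega

/-- The partition function: the number of partitions of `n`. -/
def p (n : ℕ) : ℕ := Fintype.card (Nat.Partition n)

private lemma key_count (n K : ℕ) (hn : 1 ≤ n) :
    (n - 1).choose K ≤ (K + 1).factorial * p n := by
  classical
  set D : Finset (Finset ℕ) := (Finset.Icc 1 (n - 1)).powersetCard K with hD
  have hcard : D.card = (n - 1).choose K := by
    rw [hD, Finset.card_powersetCard, Nat.card_Icc]
    congr 1
  set f : Finset ℕ → Multiset ℕ := fun S =>
    ((List.zipWith (fun x y => x - y) (S.sort (· ≤ ·) ++ [n]) (0 :: S.sort (· ≤ ·)) : List ℕ) :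
      Multiset ℕ) with hf
  have hmem : ∀ S ∈ D, S ⊆ Finset.Icc 1 (n - 1) ∧ S.card = K := by
    intro S hS
    exact Finset.mem_powersetCard.1 hS
  have hlen : ∀ S : Finset ℕ,
      (List.zipWith (fun x y => x - y) (S.sort (· ≤ ·) ++ [n]) (0 :: S.sort (· ≤ ·))).length
        = S.card + 1 := by
    intro S
    simp [List.length_zipWith, Finset.length_sort]
  have h1 : D.card ≤ (K + 1).factorial * (D.image f).card := by
    apply Finset.card_le_mul_card_image
    intro b hb
    obtain ⟨S₀, hS₀, rfl⟩ := Finset.mem_image.1 hb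
    have hmain : ({a ∈ D | f a = f S₀} : Finset (Finset ℕ)).card ≤
        ((List.zipWith (fun x y => x - y) (S₀.sort (· ≤ ·) ++ [n])
          (0 :: S₀.sort (· ≤ ·))).permutations).toFinset.card := by
      apply Finset.card_le_card_of_injOn
        (fun S => List.zipWith (fun x y => x - y) (S.sort (· ≤ ·) ++ [n]) (0 :: S.sort (· ≤ ·)))
      · intro S hS
        rw [Finset.mem_coe, Finset.mem_filter] at hS
        obtain ⟨hSD, hfS⟩ := hS
        rw [Finset.mem_coe, List.mem_toFinset, List.mem_permutations]
        exact Quotient.exact hfS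
      · intro S hS S' hS' hEq
        rw [Finset.coe_filter, Set.mem_setOf_eq] at hS hS'
        have hch : List.Chain (· < ·) 0 (S.sort (· ≤ ·) ++ [n]) :=
          chain_sort hn (hmem S hS.1).1
        have hch' : List.Chain (· < ·) 0 (S'.sort (· ≤ ·) ++ [n]) :=
          chain_sort hn (hmem S' hS'.1).1
        have := gaps_inj _ _ 0 n hch hch' hEq
        have h2 := congrArg List.toFinset this
        rwa [Finset.sort_toFinset, Finset.sort_toFinset] at h2
    refine hmain.trans ?_
    refine (List.toFinset_card_le _).trans ?_
    rw [List.length_permutations, hlen S₀, (hmem S₀ hS₀).2]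
  have h2 : (D.image f).card ≤ p n := by
    have hsub : D.image f ⊆ (Finset.univ : Finset (Nat.Partition n)).image
        (fun q => q.parts) := by
      intro b hb
      obtain ⟨S, hS, rfl⟩ := Finset.mem_image.1 hb
      have hch : List.Chain (· < ·) 0 (S.sort (· ≤ ·) ++ [n]) :=
        chain_sort hn (hmem S hS).1
      obtain ⟨hsum, -, hpos⟩ := gaps_main _ 0 n hch
      refine Finset.mem_image.2 ⟨⟨f S, ?_, ?_⟩, Finset.mem_univ _, rfl⟩
      · intro i hi
        exact hpos i (by simpa [hf] using hi)
      · simpa [hf] using hsum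
    calc (D.image f).card ≤ _ := Finset.card_le_card hsub
      _ ≤ (Finset.univ : Finset (Nat.Partition n)).card := Finset.card_image_le
      _ = p n := by rw [Finset.card_univ]; rfl
  calc (n - 1).choose K = D.card := hcard.symm
    _ ≤ (K + 1).factorial * (D.image f).card := h1
    _ ≤ (K + 1).factorial * p n := Nat.mul_le_mul_left _ h2

private lemma log_factorial_le : ∀ k : ℕ, 1 ≤ k →
    Real.log (k.factorial) ≤ k * Real.log k - k + 1 + Real.log k := by
  intro k hk
  induction k with
  | zero => omega
  | succ m ih =>
    rcases Nat.eq_or_lt_of_le hk with h | h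
    · have hm0 : m = 0 := by omega
      subst hm0
      simp [Nat.factorial]
    · have hm : 1 ≤ m := by omega
      have ihm := ih hm
      have hm0 : (0 : ℝ) < m := by exact_mod_cast hm
      have hm1 : (0 : ℝ) < (m : ℝ) + 1 := by linarith
      -- log((m+1)/m)·(m+1) ≥ 1, i.e. log(m+1) - log m ≥ 1/(m+1)
      have hkey : Real.log ((m : ℝ) / ((m : ℝ) + 1)) ≤ (m : ℝ) / ((m : ℝ) + 1) - 1 :=
        Real.log_le_sub_one_of_pos (by positivity)
      have hdiv : Real.log ((m : ℝ) / ((m : ℝ) + 1)) = Real.log m - Real.log ((m : ℝ) + 1) :=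
        Real.log_div (ne_of_gt hm0) (ne_of_gt hm1)
      have hgap : 1 / ((m : ℝ) + 1) ≤ Real.log ((m : ℝ) + 1) - Real.log m := by
      
        rw [hdiv] at hkey
        have : (m : ℝ) / ((m : ℝ) + 1) - 1 = -(1 / ((m : ℝ) + 1)) := by
          field_simp
          ring
        linarith [hkey, this ▸ hkey]
      have hfact : ((m + 1).factorial : ℝ) = ((m : ℝ) + 1) * (m.factorial : ℝ) := by
        push_cast [Nat.factorial_succ]
        ring
      have hfpos : (0 : ℝ) < (m.factorial : ℝ) := by
        exact_mod_cast m.factorial_pos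
      have hlogf : Real.log ((m + 1).factorial) =
          Real.log ((m : ℝ) + 1) + Real.log (m.factorial) := by
        rw [hfact, Real.log_mul (ne_of_gt hm1) (ne_of_gt hfpos)]
      have hcast : ((m + 1 : ℕ) : ℝ) = (m : ℝ) + 1 := by push_cast; ring
      rw [hlogf, hcast]
      have hmul : 1 ≤ ((m : ℝ) + 1) * (Real.log ((m : ℝ) + 1) - Real.log m) := by
        have := mul_le_mul_of_nonneg_left hgap (le_of_lt hm1)
        rw [mul_one_div, div_self (ne_of_gt hm1)] at this
        linarith
      nlinarith [hmul, ihm]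

private lemma endgame (k : ℝ) (hk2 : 2000000 ≤ k) :
    1.961 * (k + 1) < 2 * k - 5 - 3 * Real.log (k + 1) := by
  set s : ℝ := Real.sqrt (k + 1) with hs
  have hs2 : s ^ 2 = k + 1 := Real.sq_sqrt (by linarith)
  have hsnn : 0 ≤ s := Real.sqrt_nonneg _
  have hspos : 0 < s := Real.sqrt_pos.2 (by linarith)
  have hlogs : Real.log (k + 1) = 2 * Real.log s := by
    rw [← hs2, Real.log_pow]
    push_cast
    ring
  have hlogsb : Real.log s ≤ s - 1 := Real.log_le_sub_one_of_pos hspos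
  have hs1414 : 1414 ≤ s := by
    rw [hs, show (1414 : ℝ) = Real.sqrt (1414 ^ 2) from (Real.sqrt_sq (by norm_num)).symm]
    exact Real.sqrt_le_sqrt (by norm_num; linarith)
  have h14 : 1414 * s ≤ s * s := mul_le_mul_of_nonneg_right hs1414 hsnn
  have hss : s * s = k + 1 := by rw [← hs2]; ring
  rw [hlogs]
  linarith [hlogsb, hss, h14, hs1414]

private lemma main_real (k A F1 F2 P : ℝ) (hk2 : 2000000 ≤ k)
    (hlognat : k * A ≤ F1 + F2 + P)
    (hf1 : F1 ≤ k * Real.log k - k + 1 + Real.log k)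
    (hf2 : F2 ≤ (k + 1) * Real.log (k + 1) - (k + 1) + 1 + Real.log (k + 1))
    (hlognk : Real.log k + Real.log (k - 1) ≤ A) :
    2 * k - 5 - 3 * Real.log (k + 1) ≤ P := by
  have hkpos : (0 : ℝ) < k := by linarith
  have hk1pos : (0 : ℝ) < k - 1 := by linarith
  have hratio : Real.log (k + 1) - Real.log (k - 1) ≤ 4 / k := by
    have hpos : (0 : ℝ) < (k + 1) / (k - 1) := by positivity
    have h1 : Real.log ((k + 1) / (k - 1)) ≤ (k + 1) / (k - 1) - 1 :=
      Real.log_le_sub_one_of_pos hpos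
    have h2 : Real.log ((k + 1) / (k - 1)) = Real.log (k + 1) - Real.log (k - 1) :=
      Real.log_div (by linarith) (ne_of_gt hk1pos)
    have h3 : (k + 1) / (k - 1) - 1 = 2 / (k - 1) := by
      field_simp
      ring
    have h4 : 2 / (k - 1) ≤ 4 / k := by
      rw [div_le_div_iff₀ hk1pos hkpos]
      nlinarith
    linarith [h2 ▸ h1]
  have e1 : k * Real.log k + k * Real.log (k - 1) ≤ k * A := by
    have h := mul_le_mul_of_nonneg_left hlognk (le_of_lt hkpos)
    linarith [h]
  have e2 : k * Real.log (k + 1) - 4 ≤ k * Real.log (k - 1) := by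
    have h := mul_le_mul_of_nonneg_left hratio (le_of_lt hkpos)
    have h4 : k * (4 / k) = 4 := by field_simp
    nlinarith [h]
  have hlogk : Real.log k ≤ Real.log (k + 1) :=
    Real.log_le_log (by linarith) (by linarith)
  linarith [hlognat, hf1, hf2, e1, e2]

private lemma target_le (ε sn k : ℝ) (hε : 0 < ε) (hsn : 0 ≤ sn) (h : sn < k + 1) :
    Real.sqrt 8 * Real.log 2 * sn / (1 + ε) ≤ 1.961 * (k + 1) := by
  have hsq8 : Real.sqrt 8 ≤ 2.8285 := by
    rw [show (8 : ℝ) = 2.8285 ^ 2 - 0.00041225 by norm_num]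
    calc Real.sqrt (2.8285 ^ 2 - 0.00041225) ≤ Real.sqrt (2.8285 ^ 2) :=
          Real.sqrt_le_sqrt (by norm_num)
      _ = 2.8285 := Real.sqrt_sq (by norm_num)
  have hlog2 : Real.log 2 < 0.6931471808 := Real.log_two_lt_d9
  have hsqrt8nn : 0 ≤ Real.sqrt 8 := Real.sqrt_nonneg _
  have hlog2nn : 0 ≤ Real.log 2 := Real.log_nonneg (by norm_num)
  have h1 : Real.sqrt 8 * Real.log 2 ≤ 1.961 := by nlinarith
  have h2 : Real.sqrt 8 * Real.log 2 * sn ≤ 1.961 * (k + 1) := by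
    have hnn : 0 ≤ Real.sqrt 8 * Real.log 2 := by positivity
    nlinarith
  have h3 : Real.sqrt 8 * Real.log 2 * sn / (1 + ε) ≤ Real.sqrt 8 * Real.log 2 * sn :=
    div_le_self (by positivity) (by linarith)
  linarith

set_option maxHeartbeats 1000000


/-- For every `ε > 0`, `log p(n) > √8·(log 2)·√n/(1+ε)` for all sufficiently
large `n`. -/
theorem log_p_lower (ε : ℝ) (hε : 0 < ε) :
    ∃ N : ℕ, ∀ n : ℕ, N ≤ n →
      Real.sqrt 8 * Real.log 2 * Real.sqrt n / (1 + ε) < Real.log (p n) := by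
  refine ⟨4000000000000, fun n hn => ?_⟩
  set K := Nat.sqrt n with hK
  have hK2 : 2000000 ≤ K := by
    rw [hK]
    have : 2000000 * 2000000 ≤ n := by omega
    exact Nat.le_sqrt.2 this
  have hKK : K * K ≤ n := by simpa [pow_two] using Nat.sqrt_le' n
  have hnK : n < (K + 1) * (K + 1) := by
    simpa [pow_two, Nat.succ_eq_add_one] using Nat.lt_succ_sqrt' n
  have hn1 : 1 ≤ n := by omega
  have hKn : K ≤ n := Nat.sqrt_le_self n
  -- Natural number inequality
  have hnat : (n - K) ^ K ≤ K.factorial * ((K + 1).factorial * p n) := by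
    calc (n - K) ^ K = (n - 1 + 1 - K) ^ K := by congr 1; omega
      _ ≤ (n - 1).descFactorial K := Nat.pow_sub_le_descFactorial (n - 1) K
      _ = K.factorial * (n - 1).choose K := Nat.descFactorial_eq_factorial_mul_choose _ _
      _ ≤ K.factorial * ((K + 1).factorial * p n) :=
          Nat.mul_le_mul_left _ (key_count n K hn1)
  -- move to ℝ
  set k : ℝ := (K : ℝ) with hk
  have hk2 : (2000000 : ℝ) ≤ k := by rw [hk]; exact_mod_cast hK2
  have hppos : 0 < p n := Fintype.card_pos
  have hKltn : K < n := Nat.sqrt_lt_self (by omega)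
  have hnKpos : 0 < n - K := by omega
  have hsubcast : ((n - K : ℕ) : ℝ) = (n : ℝ) - k := by
    rw [hk, Nat.cast_sub hKn]
  have hnKR : k * (k - 1) ≤ (n : ℝ) - k := by
    have h1 : (k * k : ℝ) ≤ (n : ℝ) := by
      rw [hk]
      exact_mod_cast hKK
    nlinarith
  have hnKRpos : (0 : ℝ) < (n : ℝ) - k := by nlinarith
  -- log of the natural inequality
  have hlognat : k * Real.log ((n : ℝ) - k) ≤
      Real.log (K.factorial) + Real.log ((K + 1).factorial) + Real.log (p n) := by
    have hc : (((n - K) ^ K : ℕ) : ℝ) ≤ ((K.factorial * ((K + 1).factorial * p n) : ℕ) : ℝ) := by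
      exact_mod_cast hnat
    have hlhs : (((n - K) ^ K : ℕ) : ℝ) = ((n : ℝ) - k) ^ K := by
      push_cast [hsubcast]
      ring
    have hlog := Real.log_le_log (by positivity) (hlhs ▸ hc)
    rw [Real.log_pow] at hlog
    have f1 : ((K.factorial : ℕ) : ℝ) ≠ 0 := by exact_mod_cast K.factorial_ne_zero
    have f2 : (((K + 1).factorial : ℕ) : ℝ) ≠ 0 := by exact_mod_cast (K + 1).factorial_ne_zero
    have f3 : ((p n : ℕ) : ℝ) ≠ 0 := by exact_mod_cast hppos.ne'
    have hrhs : Real.log ((K.factorial * ((K + 1).factorial * p n) : ℕ) : ℝ) =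
        Real.log (K.factorial) + Real.log ((K + 1).factorial) + Real.log (p n) := by
      rw [Nat.cast_mul, Nat.cast_mul, Real.log_mul f1 (mul_ne_zero f2 f3), Real.log_mul f2 f3]
      ring
    rw [hrhs] at hlog
    exact_mod_cast hlog
  -- factorial bounds
  have hf1 : Real.log (K.factorial) ≤ k * Real.log k - k + 1 + Real.log k :=
    log_factorial_le K (by omega)
  have hf2 : Real.log ((K + 1).factorial) ≤ (k + 1) * Real.log (k + 1) - (k + 1) + 1 +
      Real.log (k + 1) := by
    have h := log_factorial_le (K + 1) (by omega)
    have hc : ((K + 1 : ℕ) : ℝ) = k + 1 := by rw [hk]; push_cast; ring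
    rw [hc] at h
    exact h
  have hkpos : (0 : ℝ) < k := by linarith
  have hk1pos : (0 : ℝ) < k - 1 := by linarith
  have hlognk : Real.log k + Real.log (k - 1) ≤ Real.log ((n : ℝ) - k) := by
    have h := Real.log_le_log (by positivity : (0:ℝ) < k * (k - 1)) hnKR
    rwa [Real.log_mul (ne_of_gt hkpos) (ne_of_gt hk1pos)] at h
  have hmain : 2 * k - 5 - 3 * Real.log (k + 1) ≤ Real.log (p n) :=
    main_real k _ _ _ _ hk2 hlognat hf1 hf2 hlognk
  have hsqrtn : Real.sqrt n < k + 1 := by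
    have h1 : (n : ℝ) < (k + 1) ^ 2 := by
      have h2 : (n : ℝ) < ((K + 1) * (K + 1) : ℕ) := by exact_mod_cast hnK
      rw [hk]
      push_cast at h2 ⊢
      nlinarith [h2]
    calc Real.sqrt n < Real.sqrt ((k + 1) ^ 2) :=
          Real.sqrt_lt_sqrt (by positivity) h1
      _ = k + 1 := Real.sqrt_sq (by linarith)
  have htarget : Real.sqrt 8 * Real.log 2 * Real.sqrt n / (1 + ε) ≤ 1.961 * (k + 1) :=
    target_le ε (Real.sqrt n) k hε (Real.sqrt_nonneg _) hsqrtn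
  calc Real.sqrt 8 * Real.log 2 * Real.sqrt n / (1 + ε) ≤ 1.961 * (k + 1) := htarget
    _ < 2 * k - 5 - 3 * Real.log (k + 1) := endgame k hk2
    _ ≤ Real.log (p n) := hmain
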